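/- The set P_{q,n} of q-ary sequences of length n whose minimum entry is 0, whose maximum entry is positive, and whose entries have greatest common divisor 1, is a Pearson code: it contains no constant sequence, and if x ∈ P_{q,n} and c₁ + c₂·x ∈ P_{q,n} for real numbers c₁, c₂ with c₂ > 0, then c₁ = 0 and c₂ = 1. -/
import Mathlib


/-- `P_{q,n}`: q-ary sequences (`Fin n → ℕ`, entries `≤ q-1`) with minimum
entry 0, positive maximum entry, and gcd of entries equal to 1. -/
def PearsonSet (q n : ℕ) : Set (Fin n → ℕ) :=
  {x | (∀ i, x i ≤ q - 1) ∧ (∃ i, x i = 0) ∧ (∃ i, 0 < x i) ∧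
       Finset.univ.gcd x = 1}

/-- `P_{q,n}` is a Pearson code: it contains no constant sequence, and if
`x ∈ P_{q,n}` and the entrywise transform `c₁ + c₂·x` (with `c₂ > 0`) again
lies in `P_{q,n}` (i.e. equals the real embedding of some member), then
`c₁ = 0` and `c₂ = 1`. -/
theorem stmt_5 (q n : ℕ) (hq : 2 ≤ q) (hn : 2 ≤ n) :
    (∀ c : ℕ, (fun _ : Fin n => c) ∉ PearsonSet q n) ∧
    (∀ x ∈ PearsonSet q n, ∀ y ∈ PearsonSet q n, ∀ c₁ c₂ : ℝ, 0 < c₂ →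
      (fun i => c₁ + c₂ * (x i : ℝ)) = (fun i => (y i : ℝ)) →
      c₁ = 0 ∧ c₂ = 1) := by
  constructor
  · rintro c ⟨-, ⟨i, hi⟩, ⟨j, hj⟩, -⟩
    simp only at hi hj
    omega
  · rintro x ⟨-, ⟨i0, hx0⟩, ⟨ip, hxp⟩, hxg⟩ y ⟨-, ⟨j0, hy0⟩, -, hyg⟩ c₁ c₂ hc₂ heq
    have heq' : ∀ i, c₁ + c₂ * (x i : ℝ) = (y i : ℝ) := fun i => congrFun heq i
    -- c₁ = y i0 ≥ 0
    have h1 : c₁ = (y i0 : ℝ) := by have := heq' i0; rw [hx0] at this; simpa using this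
    have hc1nn : 0 ≤ c₁ := h1 ▸ Nat.cast_nonneg _
    -- at j0 : c₁ + c₂ * x j0 = 0
    have h2 : c₁ + c₂ * (x j0 : ℝ) = 0 := by rw [heq' j0, hy0]; simp
    have hc1 : c₁ = 0 := by nlinarith [Nat.cast_nonneg (α := ℝ) (x j0)]
    refine ⟨hc1, ?_⟩
    subst hc1
    have heq'' : ∀ i, c₂ * (x i : ℝ) = (y i : ℝ) := by
      intro i; have := heq' i; linarith
    -- set a := y ip, b := x ip, b > 0, a = c₂ * b
    set a := y ip with ha
    set b := x ip with hb
    have hab : (a : ℝ) = c₂ * b := (heq'' ip).symm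
    have hbpos : 0 < b := hxp
    -- for all i : y i * b = x i * a  (in ℕ)
    have key : ∀ i, y i * b = x i * a := by
      intro i
      have : (y i : ℝ) * b = (x i : ℝ) * a := by
        rw [← heq'' i, hab]; ring
      exact_mod_cast this
    set g := Nat.gcd a b with hg
    have hgpos : 0 < g := Nat.gcd_pos_of_pos_right _ hbpos
    set a' := a / g with ha'
    set b' := b / g with hb'
    have haa : a = g * a' := (Nat.mul_div_cancel' (Nat.gcd_dvd_left a b)).symm
    have hbb : b = g * b' := (Nat.mul_div_cancel' (Nat.gcd_dvd_right a b)).symm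
    have hcop : Nat.Coprime a' b' := Nat.coprime_div_gcd_div_gcd hgpos
    have key' : ∀ i, y i * b' = x i * a' := by
      intro i
      have := key i
      rw [haa, hbb] at this
      have : g * (y i * b') = g * (x i * a') := by ring_nf; ring_nf at this; linarith
      exact Nat.eq_of_mul_eq_mul_left hgpos this
    have hb'1 : b' = 1 := by
      have hdvd : ∀ i : Fin n, b' ∣ x i := by
        intro i
        have : b' ∣ x i * a' := ⟨y i, by rw [← key' i]; ring⟩
        exact (Nat.Coprime.dvd_of_dvd_mul_right (hcop.symm) this)
      have : b' ∣ Finset.univ.gcd x := Finset.dvd_gcd fun i _ => hdvd i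
      rw [hxg] at this
      exact Nat.dvd_one.mp this
    have ha'1 : a' = 1 := by
      have hdvd : ∀ i : Fin n, a' ∣ y i := by
        intro i
        have := key' i
        rw [hb'1, mul_one] at this
        exact ⟨x i, by rw [this]; ring⟩
      have : a' ∣ Finset.univ.gcd y := Finset.dvd_gcd fun i _ => hdvd i
      rw [hyg] at this
      exact Nat.dvd_one.mp this
    have hab' : a = b := by rw [haa, hbb, ha'1, hb'1]
    have hbR : (0 : ℝ) < b := by exact_mod_cast hbpos
    have : (b : ℝ) = c₂ * b := by rw [← hab]; exact_mod_cast congrArg (Nat.cast : ℕ → ℝ) hab'.symm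
    nlinarith
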